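/- Let Ω ⊆ ℝⁿ be an open set, let E ⊆ Ω, let η > 0, and let R ⊆ ℝⁿ be a measurable set such that R ⊆ (Ω − Ω)/η and the distance from E to the complement of Ω is at least η · sup_{ξ∈R} |ξ|. Then for every Lebesgue-measurable function u : ℝⁿ → ℝⁿ, every ε > 0, and every positive integer m with mε < η, one has ∫_R F_{mε,ξ}(u, E) dξ ≤ ∫_R F_{ε,ξ}(u, Ω) dξ. -/

import Mathlib

open MeasureTheory
open scoped ENNReal

/-- The directional functional `F_{ε,ξ}(u,E)`, valued in `[0,∞]`:
`F_{ε,ξ}(u,E) = (1/ε) ∫_{E ∩ (E - εξ)} arctan(((u(x+εξ) - u(x))·ξ)²/ε) dx`. -/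
noncomputable def dirF (n : ℕ) (ε : ℝ) (ξ : EuclideanSpace ℝ (Fin n))
    (u : EuclideanSpace ℝ (Fin n) → EuclideanSpace ℝ (Fin n))
    (E : Set (EuclideanSpace ℝ (Fin n))) : ℝ≥0∞ :=
  ENNReal.ofReal (1 / ε) *
    ∫⁻ x in E ∩ ((fun y => y - ε • ξ) '' E),
      ENNReal.ofReal (Real.arctan ((inner ℝ (u (x + ε • ξ) - u x) ξ : ℝ) ^ 2 / ε))

lemma arctan_nonneg' {a : ℝ} (ha : 0 ≤ a) : 0 ≤ Real.arctan a := by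
  simpa using Real.arctan_strictMono.monotone ha

lemma arctan_add_le_of_nonneg {a b : ℝ} (ha : 0 ≤ a) (hb : 0 ≤ b) :
    Real.arctan (a + b) ≤ Real.arctan a + Real.arctan b := by
  rcases lt_or_ge (a * b) 1 with h | h
  · rw [Real.arctan_add h]
    apply Real.arctan_strictMono.monotone
    rw [le_div_iff₀ (by linarith [mul_nonneg ha hb])]
    nlinarith [mul_nonneg (add_nonneg ha hb) (mul_nonneg ha hb)]
  · have hb' : 0 < b := by nlinarith
    have ha' : 0 < a := by nlinarith
    have hba : b⁻¹ ≤ a := by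
      rw [inv_le_iff_one_le_mul₀ hb']; nlinarith
    have h2 : Real.arctan b⁻¹ ≤ Real.arctan a := Real.arctan_strictMono.monotone hba
    have h3 := Real.arctan_lt_pi_div_two (a + b)
    have h4 := Real.arctan_inv_of_pos hb'
    linarith

lemma arctan_sum_le {ι : Type*} (s : Finset ι) (f : ι → ℝ) (hf : ∀ i ∈ s, 0 ≤ f i) :
    Real.arctan (∑ i ∈ s, f i) ≤ ∑ i ∈ s, Real.arctan (f i) := by
  induction s using Finset.cons_induction with
  | empty => simp
  | cons a s ha ih =>
    rw [Finset.sum_cons, Finset.sum_cons]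
    refine (arctan_add_le_of_nonneg (hf a (Finset.mem_cons_self _ _))
      (Finset.sum_nonneg fun i hi => hf i (Finset.mem_cons_of_mem hi))).trans ?_
    exact add_le_add le_rfl (ih fun i hi => hf i (Finset.mem_cons_of_mem hi))

/-- Lemma 4.5 (Gob5.3): if `E ⊆ Ω`, `R ⊆ (Ω - Ω)/η` and the distance from `E` to the
complement of `Ω` is at least `η · sup_{ξ ∈ R} |ξ|`, then for every measurable `u`, every
`ε > 0`, and every positive integer `m` with `mε < η`,
`∫_R F_{mε,ξ}(u,E) dξ ≤ ∫_R F_{ε,ξ}(u,Ω) dξ`. -/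
theorem stmt4 (n : ℕ) (Ω E : Set (EuclideanSpace ℝ (Fin n))) (hΩ : IsOpen Ω)
    (hE : E ⊆ Ω) (η : ℝ) (hη : 0 < η)
    (R : Set (EuclideanSpace ℝ (Fin n))) (hR : MeasurableSet R)
    (hRin : R ⊆ {ξ | ∃ x ∈ Ω, ∃ x' ∈ Ω, ξ = η⁻¹ • (x' - x)})
    (hdist : ∀ ξ ∈ R, ∀ x ∈ E, ∀ y ∉ Ω, η * ‖ξ‖ ≤ dist x y)
    (u : EuclideanSpace ℝ (Fin n) → EuclideanSpace ℝ (Fin n)) (hu : Measurable u)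
    (ε : ℝ) (hε : 0 < ε) (m : ℕ) (hm : 0 < m) (hmε : m * ε < η) :
    ∫⁻ ξ in R, dirF n (m * ε) ξ u E ≤ ∫⁻ ξ in R, dirF n ε ξ u Ω := by
  have hmR : (0:ℝ) < (m:ℝ) := Nat.cast_pos.mpr hm
  have hmε' : (0:ℝ) < (m:ℝ) * ε := by positivity
  refine setLIntegral_mono' hR fun ξ hξ => ?_
  set δ : EuclideanSpace ℝ (Fin n) := ε • ξ with hδ
  set g : EuclideanSpace ℝ (Fin n) → ℝ≥0∞ := fun y =>
    ENNReal.ofReal (Real.arctan ((inner ℝ (u (y + δ) - u y) ξ : ℝ) ^ 2 / ε)) with hgdef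
  have hgm : Measurable g := by
    apply Measurable.ennreal_ofReal
    exact Real.continuous_arctan.measurable.comp
      (((((hu.comp (measurable_add_const δ)).sub hu).inner measurable_const).pow_const 2).div_const ε)
  -- notation for the sets
  set s : Set (EuclideanSpace ℝ (Fin n)) := E ∩ ((fun y => y - ((m:ℝ) * ε) • ξ) '' E) with hs
  set W : Set (EuclideanSpace ℝ (Fin n)) := Ω ∩ ((fun y => y - δ) '' Ω) with hW
  -- key pointwise inequality
  have hstep : ∀ (j : ℕ) (x : EuclideanSpace ℝ (Fin n)),
      x + (j:ℝ) • δ + δ = x + ((j:ℝ) + 1) • δ := by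
    intro j x; rw [add_smul, one_smul, ← add_assoc]
  have key : ∀ x, ENNReal.ofReal (Real.arctan
        ((inner ℝ (u (x + ((m:ℝ) * ε) • ξ) - u x) ξ : ℝ) ^ 2 / ((m:ℝ) * ε)))
      ≤ ∑ j ∈ Finset.range m, g (x + (j:ℝ) • δ) := by
    intro x
    set a : ℕ → ℝ := fun j => (inner ℝ (u (x + (j:ℝ) • δ)) ξ : ℝ) with ha
    have tel : (inner ℝ (u (x + ((m:ℝ) * ε) • ξ) - u x) ξ : ℝ)
        = ∑ j ∈ Finset.range m, (a (j + 1) - a j) := by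
      rw [Finset.sum_range_sub a]
      simp only [ha, inner_sub_left, hδ, smul_smul]
      norm_num
    have sq_le : (inner ℝ (u (x + ((m:ℝ) * ε) • ξ) - u x) ξ : ℝ) ^ 2 / ((m:ℝ) * ε)
        ≤ ∑ j ∈ Finset.range m, ((a (j + 1) - a j) ^ 2 / ε) := by
      have hcs := sq_sum_le_card_mul_sum_sq (s := Finset.range m)
        (f := fun j => a (j + 1) - a j)
      rw [Finset.card_range] at hcs
      rw [tel, ← Finset.sum_div, div_le_div_iff₀ hmε' hε]
      nlinarith [hcs, Finset.sum_nonneg (fun j (_ : j ∈ Finset.range m) =>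
        sq_nonneg (a (j + 1) - a j))]
    calc ENNReal.ofReal (Real.arctan
          ((inner ℝ (u (x + ((m:ℝ) * ε) • ξ) - u x) ξ : ℝ) ^ 2 / ((m:ℝ) * ε)))
        ≤ ENNReal.ofReal (Real.arctan (∑ j ∈ Finset.range m, ((a (j + 1) - a j) ^ 2 / ε))) :=
          ENNReal.ofReal_le_ofReal (Real.arctan_strictMono.monotone sq_le)
      _ ≤ ENNReal.ofReal (∑ j ∈ Finset.range m, Real.arctan ((a (j + 1) - a j) ^ 2 / ε)) :=
          ENNReal.ofReal_le_ofReal (arctan_sum_le _ _ fun j _ => by positivity)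
      _ = ∑ j ∈ Finset.range m, ENNReal.ofReal (Real.arctan ((a (j + 1) - a j) ^ 2 / ε)) :=
          ENNReal.ofReal_sum_of_nonneg fun j _ => arctan_nonneg' (by positivity)
      _ = ∑ j ∈ Finset.range m, g (x + (j:ℝ) • δ) := by
          refine Finset.sum_congr rfl fun j _ => ?_
          rw [hgdef]
          congr 2
          rw [hstep j x, inner_sub_left, ha]
          push_cast
          ring_nf
  -- geometric inclusion
  have hsub : ∀ j < m, s ⊆ (fun x => x + (j:ℝ) • δ) ⁻¹' W := by
    intro j hj x hx
    have hxE : x ∈ E := hx.1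
    have hΩk : ∀ k : ℕ, k ≤ m → x + (k:ℝ) • δ ∈ Ω := by
      intro k hk
      by_contra hy
      have h1 := hdist ξ hξ x hxE _ hy
      have hdx : dist x (x + (k:ℝ) • δ) = (k:ℝ) * (ε * ‖ξ‖) := by
        rw [dist_eq_norm]
        simp [hδ, norm_smul, abs_of_nonneg hε.le, mul_assoc]
      rw [hdx] at h1
      rcases eq_or_ne ξ 0 with rfl | hξ0
      · apply hy
        simpa [hδ] using hE hxE
      · have hξn : 0 < ‖ξ‖ := norm_pos_iff.mpr hξ0
        have hkm : (k:ℝ) ≤ (m:ℝ) := Nat.cast_le.mpr hk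
        have e1 : (k:ℝ) * ε * ‖ξ‖ ≤ (m:ℝ) * ε * ‖ξ‖ :=
          mul_le_mul_of_nonneg_right (mul_le_mul_of_nonneg_right hkm hε.le) hξn.le
        have e2 : (m:ℝ) * ε * ‖ξ‖ < η * ‖ξ‖ := mul_lt_mul_of_pos_right hmε hξn
        have e3 : (k:ℝ) * (ε * ‖ξ‖) = (k:ℝ) * ε * ‖ξ‖ := by ring
        linarith
    refine ⟨hΩk j hj.le, ?_⟩
    refine ⟨x + (j:ℝ) • δ + δ, ?_, by abel⟩
    rw [hstep j x]
    have : ((j:ℝ) + 1) = ((j + 1 : ℕ) : ℝ) := by push_cast; ring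
    rw [this]
    exact hΩk (j + 1) hj
  -- translation invariance
  have htrans : ∀ j : ℕ, ∫⁻ x in (fun x => x + (j:ℝ) • δ) ⁻¹' W, g (x + (j:ℝ) • δ)
      = ∫⁻ y in W, g y := fun j =>
    (measurePreserving_add_right volume ((j:ℝ) • δ)).setLIntegral_comp_preimage_emb
      (measurableEmbedding_addRight _) g W
  -- assemble
  rw [dirF, dirF]
  calc ENNReal.ofReal (1 / ((m:ℝ) * ε)) *
        ∫⁻ x in s, ENNReal.ofReal (Real.arctan
          ((inner ℝ (u (x + ((m:ℝ) * ε) • ξ) - u x) ξ : ℝ) ^ 2 / ((m:ℝ) * ε)))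
      ≤ ENNReal.ofReal (1 / ((m:ℝ) * ε)) *
        ∫⁻ x in s, ∑ j ∈ Finset.range m, g (x + (j:ℝ) • δ) := by
        exact mul_le_mul_right (lintegral_mono fun x => key x) _
    _ = ENNReal.ofReal (1 / ((m:ℝ) * ε)) *
        ∑ j ∈ Finset.range m, ∫⁻ x in s, g (x + (j:ℝ) • δ) := by
        have hsum := lintegral_finset_sum (μ := volume.restrict s) (Finset.range m)
          (f := fun j => fun x => g (x + (j:ℝ) • δ))
          (fun j _ => hgm.comp (measurable_add_const _))
        rw [hsum]
    _ ≤ ENNReal.ofReal (1 / ((m:ℝ) * ε)) *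
        ∑ _j ∈ Finset.range m, ∫⁻ y in W, g y := by
        refine mul_le_mul_right (Finset.sum_le_sum fun j hj => ?_) _
        exact (lintegral_mono_set (hsub j (Finset.mem_range.mp hj))).trans
          (le_of_eq (htrans j))
    _ = ENNReal.ofReal (1 / ε) * ∫⁻ y in W, g y := by
        rw [Finset.sum_const, Finset.card_range, nsmul_eq_mul, ← mul_assoc]
        congr 1
        rw [← ENNReal.ofReal_natCast m, ← ENNReal.ofReal_mul (by positivity)]
        congr 1
        field_simp
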